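/- arXiv:2204.07139 — 3 statements merged into one kernel-verified Lean document; each statement's English description precedes it below -/
import Mathlib

section
/- Let x and y be two nonzero pure octonions in the real octonion algebra 𝕆. Then there exist a real number c and an ℝ-algebra automorphism φ of 𝕆 such that y = c·φ(x). Moreover, if ‖x‖ = ‖y‖, then there exists an ℝ-algebra automorphism φ of 𝕆 with y = φ(x). -/
noncomputable section

/-- The real octonions: the Cayley–Dickson double of the quaternions. -/
@[ext]
structure Octo : Type where
  a : Quaternion ℝ
  b : Quaternion ℝ

namespace Octo

instance : Zero Octo := ⟨⟨0, 0⟩⟩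
instance : One Octo := ⟨⟨1, 0⟩⟩
instance : Add Octo := ⟨fun u v => ⟨u.a + v.a, u.b + v.b⟩⟩
instance : Neg Octo := ⟨fun u => ⟨-u.a, -u.b⟩⟩
instance : SMul ℝ Octo := ⟨fun r u => ⟨r • u.a, r • u.b⟩⟩
instance : Mul Octo :=
  ⟨fun u v => ⟨u.a * v.a - star v.b * u.b, v.b * u.a + u.b * star v.a⟩⟩
instance : Star Octo := ⟨fun u => ⟨star u.a, -u.b⟩⟩

@[simp] lemma zero_a : (0 : Octo).a = 0 := rfl
@[simp] lemma zero_b : (0 : Octo).b = 0 := rfl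
@[simp] lemma one_a : (1 : Octo).a = 1 := rfl
@[simp] lemma one_b : (1 : Octo).b = 0 := rfl
@[simp] lemma add_a (u v : Octo) : (u + v).a = u.a + v.a := rfl
@[simp] lemma add_b (u v : Octo) : (u + v).b = u.b + v.b := rfl
@[simp] lemma neg_a (u : Octo) : (-u).a = -u.a := rfl
@[simp] lemma neg_b (u : Octo) : (-u).b = -u.b := rfl
@[simp] lemma smul_a (r : ℝ) (u : Octo) : (r • u).a = r • u.a := rfl
@[simp] lemma smul_b (r : ℝ) (u : Octo) : (r • u).b = r • u.b := rfl
@[simp] lemma mul_a (u v : Octo) : (u * v).a = u.a * v.a - star v.b * u.b := rfl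
@[simp] lemma mul_b (u v : Octo) : (u * v).b = v.b * u.a + u.b * star v.a := rfl
@[simp] lemma star_a (u : Octo) : (star u).a = star u.a := rfl
@[simp] lemma star_b (u : Octo) : (star u).b = -u.b := rfl

instance addCommGroup : AddCommGroup Octo where
  add_assoc u v w := by refine Octo.ext ?_ ?_ <;> simp only [add_a, add_b] <;> apply add_assoc
  zero_add u := by refine Octo.ext ?_ ?_ <;> simp only [add_a, add_b, zero_a, zero_b] <;> apply zero_add
  add_zero u := by refine Octo.ext ?_ ?_ <;> simp only [add_a, add_b, zero_a, zero_b] <;> apply add_zero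
  nsmul := nsmulRec
  zsmul := zsmulRec
  neg_add_cancel u := by
    refine Octo.ext ?_ ?_ <;> simp only [add_a, add_b, neg_a, neg_b, zero_a, zero_b] <;> apply neg_add_cancel
  add_comm u v := by refine Octo.ext ?_ ?_ <;> simp only [add_a, add_b] <;> apply add_comm

lemma left_distrib' (u v w : Octo) : u * (v + w) = u * v + u * w := by
  refine Octo.ext ?_ ?_ <;> simp only [mul_a, mul_b, add_a, add_b, star_add, mul_add, add_mul] <;> abel

lemma right_distrib' (u v w : Octo) : (u + v) * w = u * w + v * w := by
  refine Octo.ext ?_ ?_ <;> simp only [mul_a, mul_b, add_a, add_b, star_add, mul_add, add_mul] <;> abel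

lemma zero_mul' (u : Octo) : 0 * u = 0 := by
  refine Octo.ext ?_ ?_ <;> simp only [mul_a, mul_b, zero_a, zero_b, mul_zero, zero_mul, sub_zero,
    add_zero, zero_add, zero_sub, neg_zero]

lemma mul_zero' (u : Octo) : u * 0 = 0 := by
  refine Octo.ext ?_ ?_ <;> simp only [mul_a, mul_b, zero_a, zero_b, mul_zero, zero_mul, sub_zero,
    add_zero, zero_add, zero_sub, neg_zero, star_zero]

instance : NonUnitalNonAssocRing Octo :=
  { Octo.addCommGroup, (inferInstance : Mul Octo) with
    left_distrib := left_distrib'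
    right_distrib := right_distrib'
    zero_mul := zero_mul'
    mul_zero := mul_zero' }

instance module : Module ℝ Octo where
  one_smul u := by refine Octo.ext ?_ ?_ <;> simp only [smul_a, smul_b] <;> apply one_smul
  mul_smul r s u := by refine Octo.ext ?_ ?_ <;> simp only [smul_a, smul_b] <;> apply mul_smul
  smul_zero r := by refine Octo.ext ?_ ?_ <;> simp only [smul_a, smul_b, zero_a, zero_b] <;> apply smul_zero
  smul_add r u v := by refine Octo.ext ?_ ?_ <;> simp only [smul_a, smul_b, add_a, add_b] <;> apply smul_add
  add_smul r s u := by refine Octo.ext ?_ ?_ <;> simp only [smul_a, smul_b, add_a, add_b] <;> apply add_smul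
  zero_smul u := by refine Octo.ext ?_ ?_ <;> simp only [smul_a, smul_b, zero_a, zero_b] <;> apply zero_smul

instance : IsScalarTower ℝ Octo Octo :=
  ⟨fun r u v => by
    show (r • u) * v = r • (u * v)
    refine Octo.ext ?_ ?_ <;>
      simp only [mul_a, mul_b, smul_a, smul_b, smul_sub, smul_add, mul_smul_comm,
        smul_mul_assoc]⟩

instance : SMulCommClass ℝ Octo Octo :=
  ⟨fun r u v => by
    show r • (u * v) = u * (r • v)
    refine Octo.ext ?_ ?_ <;>
      simp only [mul_a, mul_b, smul_a, smul_b, smul_sub, smul_add, mul_smul_comm,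
        smul_mul_assoc, Quaternion.star_smul]⟩

instance : StarRing Octo where
  star_involutive u := by refine Octo.ext ?_ ?_ <;> simp only [star_a, star_b, star_star, neg_neg]
  star_mul u v := by
    refine Octo.ext ?_ ?_ <;>
      simp only [star_a, star_b, mul_a, mul_b, star_sub, star_add, star_mul, star_star, star_neg,
        mul_neg, neg_mul, neg_add_rev, neg_neg, neg_sub] <;> abel
  star_add u v := by refine Octo.ext ?_ ?_ <;> simp only [star_a, star_b, add_a, add_b, star_add, neg_add_rev] <;> abel

instance : StarModule ℝ Octo :=
  ⟨fun r u => by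
    refine Octo.ext ?_ ?_ <;> simp only [star_a, star_b, smul_a, smul_b, Quaternion.star_smul,
      star_trivial, smul_neg]⟩

/-- The set of pure octonions (trace zero). -/
def V : Set Octo := {x : Octo | x + star x = 0}

/-- The set of scalar octonions `ℝ·1`. -/
def scalars : Set Octo := Set.range fun r : ℝ => r • (1 : Octo)

/-- `φ` is an `ℝ`-algebra automorphism of the octonions. -/
def IsAut (φ : Octo ≃ₗ[ℝ] Octo) : Prop :=
  φ 1 = 1 ∧ ∀ x y : Octo, φ (x * y) = φ x * φ y

end Octo

/-- Number of occurrences of the variable `i` in a nonassociative word. -/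
def FreeMagma.degCount {X : Type*} [DecidableEq X] : FreeMagma X → X → ℕ
  | .of x, i => if x = i then 1 else 0
  | .mul w₁ w₂, i => w₁.degCount i + w₂.degCount i

/-- A nonassociative polynomial is multilinear if every variable occurs exactly once
in each of its monomials. -/
def IsMultilinear {R : Type*} [Semiring R] {n : ℕ}
    (p : FreeNonUnitalNonAssocAlgebra R (Fin n)) : Prop :=
  ∀ w ∈ p.coeff.support, ∀ i : Fin n, w.degCount i = 1

/-- Evaluation of a nonassociative polynomial on the octonions. -/
def Octo.eval {n : ℕ} (p : FreeNonUnitalNonAssocAlgebra ℝ (Fin n)) (v : Fin n → Octo) : Octo :=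
  FreeNonUnitalNonAssocAlgebra.lift ℝ v p

namespace OctoAux
open Quaternion Octo

abbrev H := Quaternion ℝ

@[simp] lemma mkH_add (a b c d : ℝ) (x : H) :
    @HAdd.hAdd H H H _ ⟨a, b, c, d⟩ x = ⟨a + x.re, b + x.imI, c + x.imJ, d + x.imK⟩ := by
  ext <;> rfl

@[simp] lemma mkH_add' (a b c d : ℝ) (x : H) :
    @HAdd.hAdd H H H _ x ⟨a, b, c, d⟩ = ⟨x.re + a, x.imI + b, x.imJ + c, x.imK + d⟩ := by
  ext <;> rfl

@[simp] lemma mkH_neg (a b c d : ℝ) : @Neg.neg H _ ⟨a, b, c, d⟩ = ⟨-a, -b, -c, -d⟩ := by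
  ext <;> rfl

@[simp] lemma mkH_smul (r a b c d : ℝ) : @HSMul.hSMul ℝ H H _ r ⟨a, b, c, d⟩ = ⟨r * a, r * b, r * c, r * d⟩ := by
  ext <;> rfl

@[simp] lemma mkH_star (a b c d : ℝ) : @Star.star H _ ⟨a, b, c, d⟩ = ⟨a, -b, -c, -d⟩ := by
  ext
  · exact Quaternion.re_star (⟨a, b, c, d⟩ : H)
  · exact Quaternion.imI_star (⟨a, b, c, d⟩ : H)
  · exact Quaternion.imJ_star (⟨a, b, c, d⟩ : H)
  · exact Quaternion.imK_star (⟨a, b, c, d⟩ : H)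

@[simp] lemma mkH_mul (a b c d : ℝ) (x : H) :
    @HMul.hMul H H H _ ⟨a, b, c, d⟩ x = ⟨a * x.re - b * x.imI - c * x.imJ - d * x.imK,
      a * x.imI + b * x.re + c * x.imK - d * x.imJ,
      a * x.imJ - b * x.imK + c * x.re + d * x.imI,
      a * x.imK + b * x.imJ - c * x.imI + d * x.re⟩ := by
  ext
  · exact Quaternion.re_mul (⟨a, b, c, d⟩ : H) x
  · exact Quaternion.imI_mul (⟨a, b, c, d⟩ : H) x
  · exact Quaternion.imJ_mul (⟨a, b, c, d⟩ : H) x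
  · exact Quaternion.imK_mul (⟨a, b, c, d⟩ : H) x

@[simp] lemma mkH_mul' (a b c d : ℝ) (x : H) :
    @HMul.hMul H H H _ x ⟨a, b, c, d⟩ = ⟨x.re * a - x.imI * b - x.imJ * c - x.imK * d,
      x.re * b + x.imI * a + x.imJ * d - x.imK * c,
      x.re * c - x.imI * d + x.imJ * a + x.imK * b,
      x.re * d + x.imI * c - x.imJ * b + x.imK * a⟩ := by
  ext
  · exact Quaternion.re_mul x (⟨a, b, c, d⟩ : H)
  · exact Quaternion.imI_mul x (⟨a, b, c, d⟩ : H)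
  · exact Quaternion.imJ_mul x (⟨a, b, c, d⟩ : H)
  · exact Quaternion.imK_mul x (⟨a, b, c, d⟩ : H)

@[simp] lemma mkH_normSq (a b c d : ℝ) :
    normSq (⟨a, b, c, d⟩ : H) = a ^ 2 + b ^ 2 + c ^ 2 + d ^ 2 :=
  Quaternion.normSq_def' (⟨a, b, c, d⟩ : H)

/-- the canonical pure unit octonion `i`. -/
def e1 : Octo := ⟨⟨0,1,0,0⟩, 0⟩

lemma isAut_trans {φ ψ : Octo ≃ₗ[ℝ] Octo} (hφ : Octo.IsAut φ) (hψ : Octo.IsAut ψ) :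
    Octo.IsAut (φ.trans ψ) :=
  ⟨by simp [LinearEquiv.trans_apply, hφ.1, hψ.1], fun a b => by
    simp [LinearEquiv.trans_apply, hφ.2, hψ.2]⟩

lemma isAut_symm {φ : Octo ≃ₗ[ℝ] Octo} (hφ : Octo.IsAut φ) : Octo.IsAut φ.symm := by
  refine ⟨?_, ?_⟩
  · apply φ.injective; simp [hφ.1]
  · intro a b; apply φ.injective; rw [hφ.2]; simp

lemma key (a b c d x y : H) (h : b * c = 1) :
    (a * x * b) * (c * y * d) = a * (x * y) * d := by
  simp only [mul_assoc]
  rw [← mul_assoc b c, h, one_mul]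

lemma star_self_of_normSq {q : H} (hq : normSq q = 1) : star q * q = 1 := by
  rw [star_mul_self, hq]; simp

lemma self_star_of_normSq {q : H} (hq : normSq q = 1) : q * star q = 1 := by
  rw [self_mul_star, hq]; simp

/-- The automorphism `(a, b) ↦ (q a q*, p b q*)` for unit quaternions `p, q`. -/
def dmul (p q : H) (hp : normSq p = 1) (hq : normSq q = 1) : Octo ≃ₗ[ℝ] Octo where
  toFun u := ⟨q * u.a * star q, p * u.b * star q⟩
  invFun u := ⟨star q * u.a * q, star p * u.b * q⟩
  map_add' u v := by
    refine Octo.ext ?_ ?_ <;> simp [mul_add, add_mul]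
  map_smul' r u := by
    refine Octo.ext ?_ ?_ <;> simp [smul_mul_assoc, mul_smul_comm]
  left_inv u := by
    refine Octo.ext ?_ ?_ <;>
    · show _ * (_ * _ * _) * _ = _
      rw [mul_assoc _ _ (star q), ← mul_assoc (star _), star_self_of_normSq ‹_›, one_mul,
        mul_assoc, star_self_of_normSq hq, mul_one]
  right_inv u := by
    refine Octo.ext ?_ ?_ <;>
    · show _ * (_ * _ * _) * _ = _
      rw [mul_assoc _ _ q, ← mul_assoc _ (star _), self_star_of_normSq ‹_›, one_mul,
        mul_assoc, self_star_of_normSq hq, mul_one]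

@[simp] lemma dmul_apply_a (p q : H) (hp : normSq p = 1) (hq : normSq q = 1) (u : Octo) :
    (dmul p q hp hq u).a = q * u.a * star q := rfl

@[simp] lemma dmul_apply_b (p q : H) (hp : normSq p = 1) (hq : normSq q = 1) (u : Octo) :
    (dmul p q hp hq u).b = p * u.b * star q := rfl

lemma isAut_dmul (p q : H) (hp : normSq p = 1) (hq : normSq q = 1) :
    Octo.IsAut (dmul p q hp hq) := by
  have hq1 : star q * q = 1 := star_self_of_normSq hq
  have hp1 : star p * p = 1 := star_self_of_normSq hp
  constructor
  · refine Octo.ext ?_ ?_ <;> simp [self_star_of_normSq hq]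
  · intro u v
    refine Octo.ext ?_ ?_
    · show q * (u.a * v.a - star v.b * u.b) * star q =
        (q * u.a * star q) * (q * v.a * star q) - star (p * v.b * star q) * (p * u.b * star q)
      have A : (q * u.a * star q) * (q * v.a * star q) = q * (u.a * v.a) * star q :=
        key _ _ _ _ _ _ hq1
      have B : star (p * v.b * star q) * (p * u.b * star q) =
          q * (star v.b * u.b) * star q := by
        rw [star_mul, star_mul, star_star, ← mul_assoc q (star v.b) (star p)]
        exact key _ _ _ _ _ _ hp1
      rw [A, B, mul_sub, sub_mul]
    · show p * (v.b * u.a + u.b * star v.a) * star q =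
        (p * v.b * star q) * (q * u.a * star q) + (p * u.b * star q) * star (q * v.a * star q)
      have C : (p * v.b * star q) * (q * u.a * star q) = p * (v.b * u.a) * star q :=
        key _ _ _ _ _ _ hq1
      have D : (p * u.b * star q) * star (q * v.a * star q) =
          p * (u.b * star v.a) * star q := by
        rw [star_mul, star_mul, star_star, ← mul_assoc q (star v.a) (star q)]
        exact key _ _ _ _ _ _ hq1
      rw [C, D, mul_add, add_mul]

/-- The "swap" automorphism exchanging `j` with `ℓ`. -/
def sw : Octo ≃ₗ[ℝ] Octo where
  toFun u := ⟨⟨u.a.re, u.a.imI, u.b.re, u.b.imI⟩, ⟨u.a.imJ, u.a.imK, -u.b.imJ, -u.b.imK⟩⟩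
  invFun u := ⟨⟨u.a.re, u.a.imI, u.b.re, u.b.imI⟩, ⟨u.a.imJ, u.a.imK, -u.b.imJ, -u.b.imK⟩⟩
  map_add' u v := by
    refine Octo.ext ?_ ?_ <;> ext <;> simp <;> erw [mkH_add] <;> simp <;> ring
  map_smul' r u := by
    refine Octo.ext ?_ ?_ <;> ext <;> simp [mul_comm] <;> erw [mkH_smul] <;> simp [mul_comm]
  left_inv u := by
    refine Octo.ext ?_ ?_ <;> ext <;> simp
  right_inv u := by
    refine Octo.ext ?_ ?_ <;> ext <;> simp

@[simp] lemma sw_apply_a (u : Octo) :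
    (sw u).a = ⟨u.a.re, u.a.imI, u.b.re, u.b.imI⟩ := rfl

@[simp] lemma sw_apply_b (u : Octo) :
    (sw u).b = ⟨u.a.imJ, u.a.imK, -u.b.imJ, -u.b.imK⟩ := rfl

lemma isAut_sw : Octo.IsAut sw := by
  constructor
  · refine Octo.ext ?_ ?_ <;> ext <;> simp
  · intro u v
    refine Octo.ext ?_ ?_ <;> ext <;>
      simp [Octo.mul_a, Octo.mul_b, Quaternion.re_mul, Quaternion.imI_mul,
        Quaternion.imJ_mul, Quaternion.imK_mul] <;> erw [mkH_mul, mkH_mul] <;> simp <;> ring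

end OctoAux
namespace OctoAux
open Quaternion

/-- the quaternion `i` -/
def qi : H := ⟨0,1,0,0⟩

lemma normSq_smul' (r : ℝ) (a : H) : normSq (r • a) = r^2 * normSq a := by
  simp [Quaternion.normSq_def']; ring

lemma rot_core (a : H) (h0 : a.re = 0) (h1 : normSq a = 1) :
    (qi + a) * a * star (qi + a) = (⟨0, 2 + 2*a.imI, 0, 0⟩ : H) := by
  have h1' : a.imI^2 + a.imJ^2 + a.imK^2 = 1 := by
    rw [Quaternion.normSq_def', h0] at h1; linarith
  ext <;>
    simp only [qi, Quaternion.re_mul, Quaternion.imI_mul, Quaternion.imJ_mul,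
      Quaternion.imK_mul, Quaternion.re_add, Quaternion.imI_add, Quaternion.imJ_add,
      Quaternion.imK_add, Quaternion.re_star, Quaternion.imI_star, Quaternion.imJ_star,
      Quaternion.imK_star, h0, mkH_add, mkH_mul, mkH_mul', mkH_star] <;> erw [mkH_mul] <;> dsimp only
  · ring
  · linear_combination (a.imI + 2) * h1'
  · linear_combination a.imJ * h1'
  · linear_combination a.imK * h1'

lemma exists_rot (a : H) (h0 : a.re = 0) (h1 : normSq a = 1) :
    ∃ q : H, normSq q = 1 ∧ q * a * star q = qi := by
  have h1' : a.imI^2 + a.imJ^2 + a.imK^2 = 1 := by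
    rw [Quaternion.normSq_def', h0] at h1; linarith
  by_cases hc : a = -qi
  · refine ⟨⟨0,0,1,0⟩, by simp [Quaternion.normSq_def'], ?_⟩
    subst hc
    ext <;>
      simp only [qi, Quaternion.re_neg, Quaternion.imI_neg, Quaternion.imJ_neg,
        Quaternion.imK_neg, Quaternion.re_mul, Quaternion.imI_mul, Quaternion.imJ_mul,
        Quaternion.imK_mul, Quaternion.re_star, Quaternion.imI_star, Quaternion.imJ_star,
        Quaternion.imK_star, mkH_neg, mkH_mul, mkH_mul', mkH_star] <;> erw [mkH_mul] <;> norm_num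
  · have ht : a.imI ≠ -1 := by
      intro h
      apply hc
      have hj : a.imJ ^ 2 + a.imK ^ 2 = 0 := by rw [h] at h1'; nlinarith
      have hj' : a.imJ = 0 := by nlinarith [sq_nonneg a.imJ, sq_nonneg a.imK]
      have hk' : a.imK = 0 := by nlinarith [sq_nonneg a.imJ, sq_nonneg a.imK]
      ext <;> simp [qi, h0, h, hj', hk']
    have hI : -1 ≤ a.imI := by nlinarith [sq_nonneg a.imJ, sq_nonneg a.imK, sq_nonneg (a.imI + 1)]
    have hpos : 0 < 2 + 2*a.imI := by
      rcases lt_of_le_of_ne hI (Ne.symm ht) with h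
      linarith
    set m := Real.sqrt (2 + 2*a.imI) with hmdef
    have hm : m^2 = 2 + 2*a.imI := Real.sq_sqrt hpos.le
    have hm0 : m ≠ 0 := by
      have := Real.sqrt_pos.mpr hpos
      rw [← hmdef] at this; exact this.ne'
    have hnqa : normSq (qi + a) = 2 + 2*a.imI := by
      rw [Quaternion.normSq_def']
      simp [qi, h0]
      linarith [h1']
    refine ⟨m⁻¹ • (qi + a), ?_, ?_⟩
    · rw [normSq_smul', hnqa, ← hm]
      field_simp
    · rw [Quaternion.star_smul, smul_mul_assoc, mul_smul_comm, smul_mul_assoc,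
        smul_smul, rot_core a h0 h1]
      have hone : m⁻¹ * m⁻¹ * (2 + 2*a.imI) = 1 := by
        rw [← hm]; field_simp
      ext <;> simp [qi] <;> linear_combination hone
end OctoAux
namespace OctoAux
open Quaternion

lemma exists_rot' (a : H) (h0 : a.re = 0) :
    ∃ q : H, normSq q = 1 ∧ q * a * star q = Real.sqrt (normSq a) • qi := by
  by_cases ha : a = 0
  · exact ⟨1, by simp [Quaternion.normSq_def'], by simp [ha]⟩
  · have hpos : 0 < normSq a := by
      rcases lt_or_eq_of_le (Quaternion.normSq_nonneg (a := a)) with h | h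
      · exact h
      · exact absurd (Quaternion.normSq_eq_zero.mp h.symm) ha
    set s := Real.sqrt (normSq a) with hsdef
    have hs2 : s^2 = normSq a := Real.sq_sqrt hpos.le
    have hs0 : s ≠ 0 := by
      have := Real.sqrt_pos.mpr hpos
      rw [← hsdef] at this; exact this.ne'
    have hre : (s⁻¹ • a).re = 0 := by simp [h0]
    have hns : normSq (s⁻¹ • a) = 1 := by
      rw [normSq_smul', ← hs2]; field_simp
    obtain ⟨q, hq, hqe⟩ := exists_rot (s⁻¹ • a) hre hns
    refine ⟨q, hq, ?_⟩
    have : q * (s • (s⁻¹ • a)) * star q = s • qi := by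
      rw [mul_smul_comm, smul_mul_assoc, hqe]
    rwa [smul_smul, mul_inv_cancel₀ hs0, one_smul] at this

lemma exists_aut_to_e1 (x : Octo) (h0 : x.a.re = 0)
    (hn : normSq x.a + normSq x.b = 1) :
    ∃ φ : Octo ≃ₗ[ℝ] Octo, Octo.IsAut φ ∧ φ x = e1 := by
  obtain ⟨q1, hq1, hq1e⟩ := exists_rot' x.a h0
  set s := Real.sqrt (normSq x.a) with hsdef
  have hs2 : s^2 = normSq x.a := Real.sq_sqrt (Quaternion.normSq_nonneg)
  let φ1 := dmul 1 q1 (by simp [Quaternion.normSq_def']) hq1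
  have hA1 : Octo.IsAut φ1 := isAut_dmul _ _ _ _
  have hx1 : φ1 x = ⟨s • qi, x.b * star q1⟩ := by
    refine Octo.ext ?_ ?_
    · exact hq1e
    · show 1 * x.b * star q1 = _
      rw [one_mul]
  by_cases hb : x.b = 0
  · have hna : normSq x.a = 1 := by
      rw [hb] at hn; simpa using hn
    have hs1 : s = 1 := by rw [hsdef, hna, Real.sqrt_one]
    refine ⟨φ1, hA1, ?_⟩
    rw [hx1, hs1, hb]
    refine Octo.ext ?_ ?_
    · show (1:ℝ) • qi = e1.a
      rw [one_smul]; rfl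
    · show (0:H) * star q1 = e1.b
      rw [zero_mul]; rfl
  · -- stage 2 : make the b-part a positive real
    set b1 := x.b * star q1 with hb1def
    have hb1n : normSq b1 = normSq x.b := by
      rw [hb1def, map_mul normSq, Quaternion.normSq_star, hq1, mul_one]
    have hbpos : 0 < normSq x.b := by
      rcases lt_or_eq_of_le (Quaternion.normSq_nonneg (a := x.b)) with h | h
      · exact h
      · exact absurd (Quaternion.normSq_eq_zero.mp h.symm) hb
    set r := Real.sqrt (normSq x.b) with hrdef
    have hr2 : r^2 = normSq x.b := Real.sq_sqrt hbpos.le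
    have hr0 : r ≠ 0 := by
      have := Real.sqrt_pos.mpr hbpos
      rw [← hrdef] at this; exact this.ne'
    have hp : normSq (r⁻¹ • star b1) = 1 := by
      rw [normSq_smul', Quaternion.normSq_star, hb1n, ← hr2]; field_simp
    let φ2 := dmul (r⁻¹ • star b1) 1 hp (by simp [Quaternion.normSq_def'])
    have hA2 : Octo.IsAut φ2 := isAut_dmul _ _ _ _
    have hx2 : φ2 (φ1 x) = ⟨s • qi, (r : H)⟩ := by
      rw [hx1]
      refine Octo.ext ?_ ?_
      · show 1 * (s • qi) * star 1 = s • qi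
        simp
      · show (r⁻¹ • star b1) * b1 * star 1 = (r : H)
        rw [star_one, mul_one, smul_mul_assoc, star_mul_self, hb1n, Quaternion.smul_coe,
          ← hr2, sq, ← mul_assoc, inv_mul_cancel₀ hr0, one_mul]
    -- stage 3 : swap
    have hx3 : sw (φ2 (φ1 x)) = ⟨⟨0, s, r, 0⟩, 0⟩ := by
      rw [hx2]
      refine Octo.ext ?_ ?_
      · show (⟨(s • qi).re, (s • qi).imI, (r:H).re, (r:H).imI⟩ : H) = _
        ext <;> first
          | rfl
          | simp [qi]
      · show (⟨(s • qi).imJ, (s • qi).imK, -(r:H).imJ, -(r:H).imK⟩ : H) = 0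
        ext <;> first
          | rfl
          | simp [qi]
    -- stage 4 : rotate within the quaternions
    have hsr : normSq (⟨0, s, r, 0⟩ : H) = 1 := by
      rw [mkH_normSq]
      show 0^2 + s^2 + r^2 + 0^2 = 1
      rw [hs2, hr2]; linarith
    obtain ⟨q2, hq2, hq2e⟩ := exists_rot ⟨0, s, r, 0⟩ rfl hsr
    let φ4 := dmul 1 q2 (by simp [Quaternion.normSq_def']) hq2
    have hA4 : Octo.IsAut φ4 := isAut_dmul _ _ _ _
    have hx4 : φ4 ⟨⟨0, s, r, 0⟩, 0⟩ = e1 := by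
      refine Octo.ext ?_ ?_
      · exact hq2e
      · show 1 * 0 * star q2 = e1.b
        rw [one_mul, zero_mul]; rfl
    refine ⟨φ1.trans (φ2.trans (sw.trans φ4)), ?_, ?_⟩
    · exact isAut_trans hA1 (isAut_trans hA2 (isAut_trans isAut_sw hA4))
    · simp only [LinearEquiv.trans_apply]
      rw [hx3, hx4]

end OctoAux
namespace OctoAux
open Quaternion

lemma pure_re {x : Octo} (h : x ∈ Octo.V) : x.a.re = 0 := by
  have h' : x.a + star x.a = 0 := congrArg Octo.a h
  have := congrArg QuaternionAlgebra.re h'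
  simp at this
  linarith

lemma mul_star_self (x : Octo) :
    x * star x = ⟨((normSq x.a + normSq x.b : ℝ) : H), 0⟩ := by
  refine Octo.ext ?_ ?_
  · show x.a * star x.a - star (-x.b) * x.b = _
    rw [star_neg, neg_mul, sub_neg_eq_add, self_mul_star, star_mul_self,
      ← Quaternion.coe_add]
  · show (-x.b) * x.a + x.b * star (star x.a) = (0 : H)
    rw [star_star, neg_mul, neg_add_cancel]

lemma norm_pos {x : Octo} (h : x ≠ 0) : 0 < normSq x.a + normSq x.b := by
  have ha := Quaternion.normSq_nonneg (a := x.a)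
  have hb := Quaternion.normSq_nonneg (a := x.b)
  rcases lt_or_eq_of_le (add_nonneg ha hb) with hl | he
  · exact hl
  · exfalso
    apply h
    have ha0 : normSq x.a = 0 := by linarith
    have hb0 : normSq x.b = 0 := by linarith
    refine Octo.ext ?_ ?_
    · show x.a = (0 : Octo).a
      rw [Octo.zero_a]; exact Quaternion.normSq_eq_zero.mp ha0
    · show x.b = (0 : Octo).b
      rw [Octo.zero_b]; exact Quaternion.normSq_eq_zero.mp hb0

end OctoAux
open OctoAux Quaternion in
/-- Any two nonzero pure octonions are equivalent up to a scalar and an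
algebra automorphism; if they have the same norm, an automorphism alone suffices. -/
theorem pure_octonions_aut_equivalent (x y : Octo)
    (hx : x ∈ Octo.V) (hy : y ∈ Octo.V) (hx0 : x ≠ 0) (hy0 : y ≠ 0) :
    (∃ (c : ℝ) (φ : Octo ≃ₗ[ℝ] Octo), Octo.IsAut φ ∧ y = c • φ x) ∧
    (x * star x = y * star y → ∃ φ : Octo ≃ₗ[ℝ] Octo, Octo.IsAut φ ∧ y = φ x) := by
  have hxa := pure_re hx
  have hya := pure_re hy
  have hNx : 0 < normSq x.a + normSq x.b := norm_pos hx0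
  have hNy : 0 < normSq y.a + normSq y.b := norm_pos hy0
  set sx := Real.sqrt (normSq x.a + normSq x.b) with hsxdef
  set sy := Real.sqrt (normSq y.a + normSq y.b) with hsydef
  have hsx2 : sx^2 = normSq x.a + normSq x.b := Real.sq_sqrt hNx.le
  have hsy2 : sy^2 = normSq y.a + normSq y.b := Real.sq_sqrt hNy.le
  have hsx0 : sx ≠ 0 := by
    have := Real.sqrt_pos.mpr hNx; rw [← hsxdef] at this; exact this.ne'
  have hsy0 : sy ≠ 0 := by
    have := Real.sqrt_pos.mpr hNy; rw [← hsydef] at this; exact this.ne'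
  obtain ⟨φx, hφxA, hφx⟩ := exists_aut_to_e1 (sx⁻¹ • x)
    (by simp [hxa]) (by
      rw [Octo.smul_a, Octo.smul_b, normSq_smul', normSq_smul', ← mul_add, ← hsx2]
      field_simp)
  obtain ⟨φy, hφyA, hφy⟩ := exists_aut_to_e1 (sy⁻¹ • y)
    (by simp [hya]) (by
      rw [Octo.smul_a, Octo.smul_b, normSq_smul', normSq_smul', ← mul_add, ← hsy2]
      field_simp)
  set φ := φx.trans φy.symm with hφdef
  have hφA : Octo.IsAut φ := isAut_trans hφxA (isAut_symm hφyA)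
  have hxx : sx • (sx⁻¹ • x) = x := by rw [smul_smul, mul_inv_cancel₀ hsx0, one_smul]
  have hφxx : φx x = sx • e1 := by rw [← hxx, map_smul, hφx]
  have h2 : φy.symm e1 = sy⁻¹ • y := (LinearEquiv.symm_apply_eq φy).mpr hφy.symm
  have h1 : φ x = (sx * sy⁻¹) • y := by
    rw [hφdef]
    simp only [LinearEquiv.trans_apply]
    rw [hφxx, map_smul, h2, smul_smul]
  have hyx : y = (sy * sx⁻¹) • φ x := by
    rw [h1, smul_smul]
    have : sy * sx⁻¹ * (sx * sy⁻¹) = 1 := by field_simp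
    rw [this, one_smul]
  constructor
  · exact ⟨sy * sx⁻¹, φ, hφA, hyx⟩
  · intro h
    rw [mul_star_self x, mul_star_self y] at h
    have hcomp : ((normSq x.a + normSq x.b : ℝ) : H) = ((normSq y.a + normSq y.b : ℝ) : H) :=
      congrArg Octo.a h
    have hN : normSq x.a + normSq x.b = normSq y.a + normSq y.b := by
      have := congrArg QuaternionAlgebra.re hcomp
      simpa using this
    have hsxy : sx = sy := by rw [hsxdef, hsydef, hN]
    refine ⟨φ, hφA, ?_⟩
    rw [hyx, hsxy, mul_inv_cancel₀ hsy0, one_smul]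
end
end

section
/- Let V be the set of pure octonions of the real octonion algebra 𝕆, equipped with the bracket product [v,w] = v·w − w·v (which again lies in V). Let p(x₁,…,xₘ) be any element of the free nonassociative ℝ-algebra on x₁,…,xₘ. Then the image of p on the algebra (V, [·,·]) is either {0} or all of V. -/
noncomputable section

namespace Octo

lemma star_eq_neg_of_mem_V {x : Octo} (hx : x ∈ Octo.V) : star x = -x :=
  eq_neg_of_add_eq_zero_right hx

/-- The pure octonions as an `ℝ`-submodule of `𝕆`. -/
def Vsub : Submodule ℝ Octo where
  carrier := Octo.V
  add_mem' := by
    intro x y hx hy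
    have h : (x + y) + star (x + y) = (x + star x) + (y + star y) := by
      rw [star_add]; abel
    simp only [V, Set.mem_setOf_eq] at *
    rw [h, hx, hy, add_zero]
  zero_mem' := by simp [V]
  smul_mem' := by
    intro c x hx
    simp only [V, Set.mem_setOf_eq] at *
    rw [star_smul, star_trivial, ← smul_add, hx, smul_zero]

lemma bracket_mem_Vsub {x y : Octo} (hx : x ∈ Vsub) (hy : y ∈ Vsub) :
    x * y - y * x ∈ Vsub := by
  have hx' : star x = -x := star_eq_neg_of_mem_V hx
  have hy' : star y = -y := star_eq_neg_of_mem_V hy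
  show (x * y - y * x) + star (x * y - y * x) = 0
  rw [star_sub, star_mul, star_mul, hx', hy']
  simp only [neg_mul, mul_neg, neg_neg]
  abel

/-- The Malcev algebra of pure octonions: `V` equipped with the commutator bracket
`[v,w] = v·w − w·v`. -/
instance : Mul ↥Vsub :=
  ⟨fun u v => ⟨u.1 * v.1 - v.1 * u.1, bracket_mem_Vsub u.2 v.2⟩⟩

@[simp] lemma coe_bracket (u v : ↥Vsub) :
    ((u * v : ↥Vsub) : Octo) = u.1 * v.1 - v.1 * u.1 := rfl

instance : NonUnitalNonAssocRing ↥Vsub :=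
  { (inferInstance : AddCommGroup ↥Vsub), (inferInstance : Mul ↥Vsub) with
    left_distrib := fun u v w => Subtype.ext (by
      simp only [coe_bracket, Submodule.coe_add, mul_add, add_mul]; abel)
    right_distrib := fun u v w => Subtype.ext (by
      simp only [coe_bracket, Submodule.coe_add, mul_add, add_mul]; abel)
    zero_mul := fun u => Subtype.ext (by
      simp only [coe_bracket, ZeroMemClass.coe_zero, zero_mul, mul_zero, sub_zero])
    mul_zero := fun u => Subtype.ext (by
      simp only [coe_bracket, ZeroMemClass.coe_zero, zero_mul, mul_zero, sub_zero]) }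

instance : IsScalarTower ℝ ↥Vsub ↥Vsub :=
  ⟨fun r u v => Subtype.ext (by
    show ((r • u : ↥Vsub) : Octo) * v.1 - v.1 * ((r • u : ↥Vsub) : Octo)
        = r • (u.1 * v.1 - v.1 * u.1)
    simp only [SetLike.val_smul, smul_sub, smul_mul_assoc, mul_smul_comm])⟩

instance : SMulCommClass ℝ ↥Vsub ↥Vsub :=
  ⟨fun r u v => Subtype.ext (by
    show r • (u.1 * v.1 - v.1 * u.1)
        = u.1 * ((r • v : ↥Vsub) : Octo) - ((r • v : ↥Vsub) : Octo) * u.1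
    simp only [SetLike.val_smul, smul_sub, smul_mul_assoc, mul_smul_comm])⟩

/-- Evaluation of a nonassociative polynomial on the Malcev algebra `(V, [·,·])`. -/
def evalV {m : ℕ} (p : FreeNonUnitalNonAssocAlgebra ℝ (Fin m)) (v : Fin m → ↥Vsub) :
    ↥Vsub :=
  FreeNonUnitalNonAssocAlgebra.lift ℝ v p

end Octo

/- ======================= auxiliary development ======================= -/

section QuaternionLemmas

open Quaternion

abbrev HR := Quaternion ℝ

def iq : HR := ⟨0,1,0,0⟩

@[simp] lemma iq_re : iq.re = 0 := rfl
@[simp] lemma iq_imI : iq.imI = 1 := rfl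
@[simp] lemma iq_imJ : iq.imJ = 0 := rfl
@[simp] lemma iq_imK : iq.imK = 0 := rfl

def jq : HR := ⟨0,0,1,0⟩

@[simp] lemma jq_re : jq.re = 0 := rfl
@[simp] lemma jq_imI : jq.imI = 0 := rfl
@[simp] lemma jq_imJ : jq.imJ = 1 := rfl
@[simp] lemma jq_imK : jq.imK = 0 := rfl

lemma normSq_iq : normSq iq = 1 := by simp [normSq_def']

/-- Left multiplication by a unit quaternion moves any quaternion to
the nonnegative real of the same norm. -/
lemma exists_unit_left_mul (y : HR) :
    ∃ p : HR, normSq p = 1 ∧ p * y = ((Real.sqrt (normSq y) : ℝ) : HR) := by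
  rcases eq_or_ne y 0 with rfl | hy
  · exact ⟨1, by simp, by simp⟩
  · set m := Real.sqrt (normSq y) with hm
    have hm2 : m ^ 2 = normSq y := Real.sq_sqrt (normSq_nonneg)
    have hmpos : 0 < m := Real.sqrt_pos.2 (lt_of_le_of_ne normSq_nonneg (Ne.symm (normSq_ne_zero.2 hy)))
    refine ⟨m⁻¹ • star y, ?_, ?_⟩
    · rw [normSq_smul, normSq_star, ← hm2]; field_simp
    · rw [smul_mul_assoc, star_mul_self, smul_coe]
      congr 1
      rw [← hm2]
      field_simp

/-- Conjugation by a unit quaternion rotates any pure quaternion to `‖x‖ • i`. -/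
lemma exists_unit_conj (x : HR) (hx : x.re = 0) :
    ∃ c : HR, normSq c = 1 ∧ c * x * star c = (Real.sqrt (normSq x)) • iq := by
  set n := Real.sqrt (normSq x) with hn
  have hn2 : n ^ 2 = normSq x := Real.sq_sqrt (normSq_nonneg)
  have hnn : 0 ≤ n := Real.sqrt_nonneg _
  by_cases hxe : x = -(n • iq)
  · refine ⟨jq, by simp [normSq_def'], ?_⟩
    rw [hxe]
    ext <;> simp [Quaternion.re_mul, Quaternion.imI_mul, Quaternion.imJ_mul,
      Quaternion.imK_mul] <;> ring
  · set d : HR := (n : HR) - iq * x with hd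
    have hd0 : d ≠ 0 := by
      intro h
      apply hxe
      have h1 : iq * x = (n : HR) := by
        have := h
        rw [hd, sub_eq_zero] at this
        exact this.symm
      have h2 : iq * (iq * x) = iq * (n : HR) := by rw [h1]
      rw [← mul_assoc] at h2
      have hii : iq * iq = -1 := by ext <;> simp [Quaternion.re_mul, Quaternion.imI_mul,
        Quaternion.imJ_mul, Quaternion.imK_mul]
      rw [hii, neg_one_mul, mul_coe_eq_smul] at h2
      rw [← h2, neg_neg]
    have hn2' : n ^ 2 = x.imI^2 + x.imJ^2 + x.imK^2 := by
      rw [hn2, normSq_def', hx]; ring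
    have key : d * x = (n • iq) * d := by
      rw [hd]
      ext <;>
        simp only [iq_re, iq_imI, iq_imJ, iq_imK, Quaternion.re_mul, Quaternion.imI_mul, Quaternion.imJ_mul,
          Quaternion.imK_mul, Quaternion.re_sub, Quaternion.imI_sub, Quaternion.imJ_sub,
          Quaternion.imK_sub, Quaternion.re_coe, Quaternion.imI_coe, Quaternion.imJ_coe,
          Quaternion.imK_coe, Quaternion.re_smul, Quaternion.imI_smul, Quaternion.imJ_smul,
          Quaternion.imK_smul, hx, smul_eq_mul] <;>
        linear_combination (norm := ring_nf) ?_ <;>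
        nlinarith [hn2', sq_nonneg x.imI]
    set s := Real.sqrt (normSq d) with hs
    have hs2 : s ^ 2 = normSq d := Real.sq_sqrt (normSq_nonneg)
    have hspos : 0 < s := Real.sqrt_pos.2 (lt_of_le_of_ne normSq_nonneg (Ne.symm (normSq_ne_zero.2 hd0)))
    refine ⟨s⁻¹ • d, ?_, ?_⟩
    · rw [normSq_smul, ← hs2]; field_simp
    · rw [show star (s⁻¹ • d) = s⁻¹ • star d from by simp]
      rw [smul_mul_assoc, smul_mul_assoc, mul_smul_comm, smul_smul]
      rw [key, mul_assoc, self_mul_star, mul_coe_eq_smul]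
      rw [smul_smul, smul_smul, ← hs2]
      rw [show s⁻¹ * s⁻¹ * s ^ 2 * n = n from by field_simp]

lemma pure_star {a : HR} (h : a.re = 0) : star a = -a := by
  ext <;> simp [h]

end QuaternionLemmas

namespace Octo

open Quaternion

@[simp] lemma mk_a (q r : Quaternion ℝ) : (Octo.mk q r).a = q := rfl
@[simp] lemma mk_b (q r : Quaternion ℝ) : (Octo.mk q r).b = r := rfl

/-- The squared Euclidean norm of an octonion. -/
def Nsq (x : Octo) : ℝ := normSq x.a + normSq x.b

lemma Nsq_nonneg (x : Octo) : 0 ≤ Nsq x :=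
  add_nonneg normSq_nonneg normSq_nonneg

lemma Nsq_zero : Nsq 0 = 0 := by simp [Nsq]

lemma Nsq_eq_zero {x : Octo} (h : Nsq x = 0) : x = 0 := by
  rw [Nsq] at h
  have h1 : normSq x.a = 0 ∧ normSq x.b = 0 := by
    constructor <;> nlinarith [normSq_nonneg (a := x.a), normSq_nonneg (a := x.b)]
  refine Octo.ext ?_ ?_
  · simpa using normSq_eq_zero.1 h1.1
  · simpa using normSq_eq_zero.1 h1.2

lemma Nsq_def' (x : Octo) : Nsq x = x.a.re^2 + x.a.imI^2 + x.a.imJ^2 + x.a.imK^2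
    + x.b.re^2 + x.b.imI^2 + x.b.imJ^2 + x.b.imK^2 := by
  simp [Nsq, normSq_def']; ring

/-- The Euclidean inner product on the octonions, as a bilinear form. -/
def Bf : Octo →ₗ[ℝ] Octo →ₗ[ℝ] ℝ :=
  LinearMap.mk₂ ℝ (fun x y => (x.a * star y.a).re + (x.b * star y.b).re)
    (fun x x' y => by simp [add_mul]; ring)
    (fun r x y => by simp [smul_mul_assoc]; ring)
    (fun x y y' => by simp [mul_add]; ring)
    (fun r x y => by
      simp only [smul_a, smul_b, Quaternion.star_smul, mul_smul_comm, Quaternion.re_smul,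
        smul_eq_mul]
      ring)

lemma Bf_self (x : Octo) : Bf x x = Nsq x := by
  simp [Bf, Nsq, normSq_def]

lemma Bf_comm (x y : Octo) : Bf x y = Bf y x := by
  simp only [Bf, LinearMap.mk₂_apply]
  simp only [Quaternion.re_mul, Quaternion.re_star, Quaternion.imI_star, Quaternion.imJ_star,
    Quaternion.imK_star]
  ring

/-- Membership in `Vsub` in terms of the real part. -/
lemma mem_Vsub_iff_re {x : Octo} : x ∈ Vsub ↔ x.a.re = 0 := by
  have hmem : x ∈ Vsub ↔ x + star x = 0 := Iff.rfl
  rw [hmem]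
  constructor
  · intro h
    have := congrArg (fun o : Octo => o.a.re) h
    simp only [add_a, star_a, Quaternion.re_add, Quaternion.re_star, zero_a,
      Quaternion.re_zero] at this
    linarith
  · intro h
    refine Octo.ext ?_ ?_
    · ext <;> simp [h]
    · simp

lemma mem_Vsub_iff_star {x : Octo} : x ∈ Vsub ↔ star x.a = -x.a := by
  rw [mem_Vsub_iff_re]
  constructor
  · exact fun h => pure_star h
  · intro h
    have := congrArg QuaternionAlgebra.re h
    simp only [Quaternion.re_star, Quaternion.re_neg] at this
    linarith

/-- A bundled automorphism of the octonions preserving `V` and the norm. -/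
structure MyAut where
  f : Octo → Octo
  g : Octo → Octo
  gf : ∀ x, g (f x) = x
  fg : ∀ x, f (g x) = x
  f_add : ∀ x y, f (x + y) = f x + f y
  f_smul : ∀ (r : ℝ) x, f (r • x) = r • f x
  f_mul : ∀ x y, f (x * y) = f x * f y
  f_V : ∀ x, x ∈ Vsub → f x ∈ Vsub
  g_V : ∀ x, x ∈ Vsub → g x ∈ Vsub
  f_nsq : ∀ x, Nsq (f x) = Nsq x

namespace MyAut

lemma f_inj (Φ : MyAut) {x y : Octo} (h : Φ.f x = Φ.f y) : x = y := by
  rw [← Φ.gf x, ← Φ.gf y, h]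

lemma g_add (Φ : MyAut) (x y : Octo) : Φ.g (x + y) = Φ.g x + Φ.g y := by
  apply Φ.f_inj
  rw [Φ.fg, Φ.f_add, Φ.fg, Φ.fg]

lemma g_smul (Φ : MyAut) (r : ℝ) (x : Octo) : Φ.g (r • x) = r • Φ.g x := by
  apply Φ.f_inj
  rw [Φ.fg, Φ.f_smul, Φ.fg]

lemma g_mul (Φ : MyAut) (x y : Octo) : Φ.g (x * y) = Φ.g x * Φ.g y := by
  apply Φ.f_inj
  rw [Φ.fg, Φ.f_mul, Φ.fg, Φ.fg]

lemma g_nsq (Φ : MyAut) (x : Octo) : Nsq (Φ.g x) = Nsq x := by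
  rw [← Φ.f_nsq (Φ.g x), Φ.fg]

/-- Inverse automorphism. -/
def symm (Φ : MyAut) : MyAut where
  f := Φ.g
  g := Φ.f
  gf := Φ.fg
  fg := Φ.gf
  f_add := Φ.g_add
  f_smul := Φ.g_smul
  f_mul := Φ.g_mul
  f_V := Φ.g_V
  g_V := Φ.f_V
  f_nsq := Φ.g_nsq

/-- Composition of automorphisms. -/
def comp (Ψ Φ : MyAut) : MyAut where
  f x := Ψ.f (Φ.f x)
  g x := Φ.g (Ψ.g x)
  gf x := by rw [Ψ.gf, Φ.gf]
  fg x := by rw [Φ.fg, Ψ.fg]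
  f_add x y := by rw [Φ.f_add, Ψ.f_add]
  f_smul r x := by rw [Φ.f_smul, Ψ.f_smul]
  f_mul x y := by rw [Φ.f_mul, Ψ.f_mul]
  f_V x hx := Ψ.f_V _ (Φ.f_V _ hx)
  g_V x hx := Φ.g_V _ (Ψ.g_V _ hx)
  f_nsq x := by rw [Ψ.f_nsq, Φ.f_nsq]

lemma f_zero (Φ : MyAut) : Φ.f 0 = 0 := by
  have := Φ.f_smul 0 0
  simpa using this

lemma f_neg (Φ : MyAut) (x : Octo) : Φ.f (-x) = -Φ.f x := by
  have := Φ.f_smul (-1) x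
  simpa using this

lemma f_sub (Φ : MyAut) (x y : Octo) : Φ.f (x - y) = Φ.f x - Φ.f y := by
  rw [sub_eq_add_neg, Φ.f_add, Φ.f_neg, sub_eq_add_neg]

end MyAut

/-- The automorphism `(a, b) ↦ (c a c*, p b c*)` for unit quaternions `c, p`. -/
def chi (c p : HR) (hc : normSq c = 1) (hp : normSq p = 1) : MyAut := by
  have hc1 : star c * c = 1 := by rw [star_mul_self, hc]; simp
  have hc2 : c * star c = 1 := by rw [self_mul_star, hc]; simp
  have hp1 : star p * p = 1 := by rw [star_mul_self, hp]; simp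
  have hp2 : p * star p = 1 := by rw [self_mul_star, hp]; simp
  have hc1' : ∀ z : HR, star c * (c * z) = z := fun z => by rw [← mul_assoc, hc1, one_mul]
  have hc2' : ∀ z : HR, c * (star c * z) = z := fun z => by rw [← mul_assoc, hc2, one_mul]
  have hp1' : ∀ z : HR, star p * (p * z) = z := fun z => by rw [← mul_assoc, hp1, one_mul]
  have hp2' : ∀ z : HR, p * (star p * z) = z := fun z => by rw [← mul_assoc, hp2, one_mul]
  exact
  { f := fun u => ⟨c * u.a * star c, p * u.b * star c⟩
    g := fun u => ⟨star c * u.a * c, star p * u.b * c⟩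
    gf := fun x => by
      refine Octo.ext ?_ ?_ <;>
        simp only [mk_a, mk_b, mul_assoc, hc1', hp1', hc1, hc2, mul_one] <;> rfl
    fg := fun x => by
      refine Octo.ext ?_ ?_ <;>
        simp only [mk_a, mk_b, mul_assoc, hc2', hp2', hc1, hc2, mul_one] <;> rfl
    f_add := fun x y => by
      refine Octo.ext ?_ ?_ <;>
        simp only [mk_a, mk_b, add_a, add_b, mul_add, add_mul]
    f_smul := fun r x => by
      refine Octo.ext ?_ ?_ <;>
        simp only [mk_a, mk_b, smul_a, smul_b, mul_smul_comm, smul_mul_assoc]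
    f_mul := fun x y => by
      refine Octo.ext ?_ ?_ <;>
        simp only [mk_a, mk_b, mul_a, mul_b, star_mul, star_star, mul_sub, sub_mul,
          mul_add, add_mul, mul_assoc, hc1', hc2', hp1', hp2']
    f_V := fun x hx => by
      rw [mem_Vsub_iff_star] at hx ⊢
      simp only [mk_a, star_mul, star_star, hx]
      simp only [mul_neg, neg_mul, mul_assoc]
    g_V := fun x hx => by
      rw [mem_Vsub_iff_star] at hx ⊢
      simp only [mk_a, star_mul, star_star, hx]
      simp only [mul_neg, neg_mul, mul_assoc]
    f_nsq := fun x => by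
      simp only [Nsq, mk_a, mk_b, map_mul, normSq_star, hc, hp]
      ring }

/-- The coordinate-swap automorphism `σ`. -/
def sf (u : Octo) : Octo :=
  ⟨⟨u.a.re, u.a.imI, u.b.re, u.b.imI⟩, ⟨u.a.imJ, u.a.imK, -u.b.imJ, -u.b.imK⟩⟩

@[simp] lemma sf_a_re (u : Octo) : (sf u).a.re = u.a.re := rfl
@[simp] lemma sf_a_imI (u : Octo) : (sf u).a.imI = u.a.imI := rfl
@[simp] lemma sf_a_imJ (u : Octo) : (sf u).a.imJ = u.b.re := rfl
@[simp] lemma sf_a_imK (u : Octo) : (sf u).a.imK = u.b.imI := rfl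
@[simp] lemma sf_b_re (u : Octo) : (sf u).b.re = u.a.imJ := rfl
@[simp] lemma sf_b_imI (u : Octo) : (sf u).b.imI = u.a.imK := rfl
@[simp] lemma sf_b_imJ (u : Octo) : (sf u).b.imJ = -u.b.imJ := rfl
@[simp] lemma sf_b_imK (u : Octo) : (sf u).b.imK = -u.b.imK := rfl

set_option maxHeartbeats 1000000 in
def sigmaAut : MyAut where
  f := sf
  g := sf
  gf x := by
    refine Octo.ext ?_ ?_ <;> ext <;>
      simp only [sf_a_re, sf_a_imI, sf_a_imJ, sf_a_imK, sf_b_re, sf_b_imI, sf_b_imJ,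
        sf_b_imK, neg_neg]
  fg x := by
    refine Octo.ext ?_ ?_ <;> ext <;>
      simp only [sf_a_re, sf_a_imI, sf_a_imJ, sf_a_imK, sf_b_re, sf_b_imI, sf_b_imJ,
        sf_b_imK, neg_neg]
  f_add x y := by
    refine Octo.ext ?_ ?_ <;> ext <;>
      simp only [sf_a_re, sf_a_imI, sf_a_imJ, sf_a_imK, sf_b_re, sf_b_imI, sf_b_imJ,
        sf_b_imK, add_a, add_b, Quaternion.re_add, Quaternion.imI_add, Quaternion.imJ_add,
        Quaternion.imK_add] <;> ring
  f_smul r x := by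
    refine Octo.ext ?_ ?_ <;> ext <;>
      simp only [sf_a_re, sf_a_imI, sf_a_imJ, sf_a_imK, sf_b_re, sf_b_imI, sf_b_imJ,
        sf_b_imK, smul_a, smul_b, Quaternion.re_smul, Quaternion.imI_smul,
        Quaternion.imJ_smul, Quaternion.imK_smul, smul_eq_mul] <;> ring
  f_mul x y := by
    refine Octo.ext ?_ ?_ <;> ext <;>
      simp only [sf_a_re, sf_a_imI, sf_a_imJ, sf_a_imK, sf_b_re, sf_b_imI, sf_b_imJ,
        sf_b_imK, mul_a, mul_b, Quaternion.re_mul, Quaternion.imI_mul, Quaternion.imJ_mul,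
        Quaternion.imK_mul, Quaternion.re_sub, Quaternion.imI_sub, Quaternion.imJ_sub,
        Quaternion.imK_sub, Quaternion.re_add, Quaternion.imI_add, Quaternion.imJ_add,
        Quaternion.imK_add, Quaternion.re_star, Quaternion.imI_star, Quaternion.imJ_star,
        Quaternion.imK_star, Quaternion.re_neg, Quaternion.imI_neg, Quaternion.imJ_neg,
        Quaternion.imK_neg] <;> ring
  f_V x hx := by
    rw [mem_Vsub_iff_re] at hx ⊢
    simpa using hx
  g_V x hx := by
    rw [mem_Vsub_iff_re] at hx ⊢
    simpa using hx
  f_nsq x := by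
    rw [Nsq_def', Nsq_def']
    simp only [sf_a_re, sf_a_imI, sf_a_imJ, sf_a_imK, sf_b_re, sf_b_imI, sf_b_imJ, sf_b_imK]
    ring

/-- The canonical pure octonion of given length. -/
def canon (r : ℝ) : Octo := ⟨r • iq, 0⟩

lemma canon_nsq (r : ℝ) : Nsq (canon r) = r ^ 2 := by
  simp [canon, Nsq, normSq_smul, normSq_iq]

/-- Every pure octonion can be moved to canonical form by an automorphism. -/
lemma exists_aut_canon (u : Octo) (hu : u ∈ Vsub) :
    ∃ Φ : MyAut, Φ.f u = canon (Real.sqrt (Nsq u)) := by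
  obtain ⟨x, y⟩ := u
  have hx : x.re = 0 := mem_Vsub_iff_re.1 hu
  obtain ⟨c, hc, hcx⟩ := exists_unit_conj x hx
  obtain ⟨p, hp, hpy⟩ := exists_unit_left_mul (y * star c)
  set n := Real.sqrt (normSq x) with hn
  set m := Real.sqrt (normSq (y * star c)) with hm
  have hn2 : n ^ 2 = normSq x := Real.sq_sqrt normSq_nonneg
  have hm2 : m ^ 2 = normSq (y * star c) := Real.sq_sqrt normSq_nonneg
  have hmy : normSq (y * star c) = normSq y := by
    rw [map_mul, normSq_star, hc, mul_one]
  set Φ₁ := chi c p hc hp with hΦ₁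
  have s1 : Φ₁.f ⟨x, y⟩ = ⟨n • iq, ((m : ℝ) : HR)⟩ := by
    refine Octo.ext ?_ ?_
    · simpa [hΦ₁, chi] using hcx
    · show p * y * star c = _
      rw [mul_assoc, hpy]
  set x' : HR := ⟨0, n, m, 0⟩ with hx'
  have s2 : sigmaAut.f ⟨n • iq, ((m : ℝ) : HR)⟩ = ⟨x', 0⟩ := by
    refine Octo.ext ?_ ?_ <;> ext <;>
      simp [sigmaAut, sf, hx']
  obtain ⟨c₂, hc₂, hcx₂⟩ := exists_unit_conj x' (by rw [hx'])
  set Φ₃ := chi c₂ 1 hc₂ (by simp) with hΦ₃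
  have hnq : normSq x' = Nsq ⟨x, y⟩ := by
    rw [Nsq]
    simp only [mk_a, mk_b]
    rw [normSq_def', hx']
    simp only
    rw [← hmy, ← hn2, ← hm2]
    ring
  have s3 : Φ₃.f ⟨x', 0⟩ = canon (Real.sqrt (Nsq ⟨x, y⟩)) := by
    refine Octo.ext ?_ ?_
    · show c₂ * x' * star c₂ = _
      rw [hcx₂, hnq]
      rfl
    · show 1 * 0 * star c₂ = _
      simp [canon]
  refine ⟨(Φ₃.comp sigmaAut).comp Φ₁, ?_⟩
  show Φ₃.f (sigmaAut.f (Φ₁.f ⟨x, y⟩)) = _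
  rw [s1, s2, s3]

lemma exists_aut (u z : Octo) (hu : u ∈ Vsub) (hz : z ∈ Vsub) (h : Nsq u = Nsq z) :
    ∃ Φ : MyAut, Φ.f u = z := by
  obtain ⟨Φu, hΦu⟩ := exists_aut_canon u hu
  obtain ⟨Φz, hΦz⟩ := exists_aut_canon z hz
  refine ⟨Φz.symm.comp Φu, ?_⟩
  show Φz.g (Φu.f u) = z
  rw [hΦu, h, ← hΦz, Φz.gf]

/-- Restriction of an automorphism to the Malcev algebra `V`, as a
non-unital algebra homomorphism for the bracket. -/
def MyAut.toHom (Φ : MyAut) : ↥Vsub →ₙₐ[ℝ] ↥Vsub where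
  toFun a := ⟨Φ.f a.1, Φ.f_V _ a.2⟩
  map_smul' r a := Subtype.ext (Φ.f_smul r a.1)
  map_zero' := Subtype.ext Φ.f_zero
  map_add' a b := Subtype.ext (Φ.f_add a.1 b.1)
  map_mul' a b := Subtype.ext (by
    show Φ.f (a.1 * b.1 - b.1 * a.1) = Φ.f a.1 * Φ.f b.1 - Φ.f b.1 * Φ.f a.1
    rw [Φ.f_sub, Φ.f_mul, Φ.f_mul])

@[simp] lemma MyAut.toHom_coe (Φ : MyAut) (a : ↥Vsub) :
    ((Φ.toHom a : ↥Vsub) : Octo) = Φ.f a.1 := rfl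

/-! ### Evaluation machinery -/

section Eval

variable {m : ℕ}

/-- Naturality of evaluation with respect to bracket homomorphisms. -/
lemma evalV_comp (Φ : MyAut) (p : FreeNonUnitalNonAssocAlgebra ℝ (Fin m))
    (v : Fin m → ↥Vsub) :
    evalV p (fun i => Φ.toHom (v i)) = Φ.toHom (evalV p v) := by
  have h : FreeNonUnitalNonAssocAlgebra.lift ℝ (fun i => Φ.toHom (v i))
      = Φ.toHom.comp (FreeNonUnitalNonAssocAlgebra.lift ℝ v) := by
    refine FreeNonUnitalNonAssocAlgebra.hom_ext ℝ fun x => ?_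
    simp [FreeNonUnitalNonAssocAlgebra.lift_of_apply, NonUnitalAlgHom.comp_apply]
  show FreeNonUnitalNonAssocAlgebra.lift ℝ (fun i => Φ.toHom (v i)) p = _
  rw [h]
  rfl

/-- Total degree of a nonassociative word. -/
def wlen : FreeMagma (Fin m) → ℕ
  | .of _ => 1
  | .mul a b => wlen a + wlen b

lemma evalV_eq_sum (p : FreeNonUnitalNonAssocAlgebra ℝ (Fin m)) (v : Fin m → ↥Vsub) :
    evalV p v = p.coeff.sum fun w r => r • (FreeMagma.lift v w : ↥Vsub) := rfl

lemma lift_smul (t : ℝ) (v : Fin m → ↥Vsub) (w : FreeMagma (Fin m)) :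
    FreeMagma.lift (t • v) w = t ^ wlen w • FreeMagma.lift v w := by
  induction w with
  | ih1 x => simp [wlen, FreeMagma.lift_of]
  | ih2 a b iha ihb =>
      rw [map_mul, map_mul, iha, ihb, smul_mul_assoc, mul_smul_comm, smul_smul, ← pow_add]
      rfl

lemma lift_zero' (w : FreeMagma (Fin m)) :
    FreeMagma.lift (0 : Fin m → ↥Vsub) w = 0 := by
  induction w with
  | ih1 x => simp [FreeMagma.lift_of]
  | ih2 a b iha ihb => rw [map_mul, iha, zero_mul]

lemma evalV_zero (p : FreeNonUnitalNonAssocAlgebra ℝ (Fin m)) :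
    evalV p (0 : Fin m → ↥Vsub) = 0 := by
  rw [evalV_eq_sum]
  simp [Finsupp.sum, lift_zero']

lemma evalV_smul_eq (p : FreeNonUnitalNonAssocAlgebra ℝ (Fin m)) (v : Fin m → ↥Vsub)
    (t : ℝ) :
    evalV p (t • v) = ∑ w ∈ p.coeff.support, (p.coeff w * t ^ wlen w) • FreeMagma.lift v w := by
  rw [evalV_eq_sum]
  rw [Finsupp.sum]
  refine Finset.sum_congr rfl fun w _ => ?_
  rw [lift_smul, smul_smul]

end Eval

end Octo


/-- The image of any nonassociative polynomial on the Malcev algebra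
of pure octonions (with the commutator bracket) is either `{0}` or all of `V`. -/
theorem polynomial_image_on_malcev_pure_octonions {m : ℕ}
    (p : FreeNonUnitalNonAssocAlgebra ℝ (Fin m)) :
    (Set.range fun v : Fin m → ↥Octo.Vsub => Octo.evalV p v) = {0} ∨
    (Set.range fun v : Fin m → ↥Octo.Vsub => Octo.evalV p v) = Set.univ := by
  by_cases h0 : (Set.range fun v : Fin m → ↥Octo.Vsub => Octo.evalV p v) = {0}
  · exact Or.inl h0
  right
  have hex : ∃ v₀ : Fin m → ↥Octo.Vsub, Octo.evalV p v₀ ≠ 0 := by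
    by_contra hall
    push_neg at hall
    apply h0
    apply Set.eq_singleton_iff_unique_mem.2
    exact ⟨⟨fun _ => 0, hall _⟩, by rintro y ⟨v, rfl⟩; exact hall v⟩
  obtain ⟨v₀, hv₀⟩ := hex
  apply Set.eq_univ_of_forall
  intro z
  set q : Polynomial ℝ := ∑ w ∈ p.coeff.support, ∑ w' ∈ p.coeff.support,
    Polynomial.C (p.coeff w * p.coeff w' *
      Octo.Bf ((FreeMagma.lift v₀ w : ↥Octo.Vsub) : Octo)
        ((FreeMagma.lift v₀ w' : ↥Octo.Vsub) : Octo))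
      * Polynomial.X ^ (Octo.wlen w + Octo.wlen w') with hq
  have key : ∀ t : ℝ, q.eval t
      = Octo.Nsq ((Octo.evalV p (t • v₀) : ↥Octo.Vsub) : Octo) := by
    intro t
    rw [Octo.evalV_smul_eq]
    have hco : ((∑ w ∈ p.coeff.support,
          (p.coeff w * t ^ Octo.wlen w) • FreeMagma.lift v₀ w : ↥Octo.Vsub) : Octo)
        = ∑ w ∈ p.coeff.support, (p.coeff w * t ^ Octo.wlen w)
            • ((FreeMagma.lift v₀ w : ↥Octo.Vsub) : Octo) := by
      simp
    rw [hco, ← Octo.Bf_self]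
    simp only [hq, map_sum, map_smul, LinearMap.coe_sum, Finset.sum_apply,
      LinearMap.smul_apply, smul_eq_mul, Polynomial.eval_finset_sum, Polynomial.eval_mul,
      Polynomial.eval_C, Polynomial.eval_pow, Polynomial.eval_X]
    refine Finset.sum_congr rfl fun w _ => ?_
    rw [Finset.mul_sum]
    refine Finset.sum_congr rfl fun w' _ => ?_
    rw [pow_add, Octo.Bf_comm]
    ring
  have h00 : q.eval 0 = 0 := by
    rw [key 0, show (0 : ℝ) • v₀ = 0 from by funext i; simp, Octo.evalV_zero]
    simpa using Octo.Nsq_zero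
  have h11 : q.eval 1 = Octo.Nsq ((Octo.evalV p v₀ : ↥Octo.Vsub) : Octo) := by
    rw [key 1, show (1 : ℝ) • v₀ = v₀ from by funext i; simp]
  have hpos : 0 < q.eval 1 := by
    rw [h11]
    refine lt_of_le_of_ne (Octo.Nsq_nonneg _) (Ne.symm fun h => ?_)
    exact hv₀ (Subtype.ext (Octo.Nsq_eq_zero h))
  have hnn : ∀ t : ℝ, 0 ≤ q.eval t := fun t => by
    rw [key t]; exact Octo.Nsq_nonneg _
  have hdeg : 0 < q.degree := by
    by_contra hd
    have hd' : q.degree ≤ 0 := not_lt.1 hd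
    have heq : q.eval 0 = q.eval 1 := by
      conv_lhs => rw [Polynomial.eq_C_of_degree_le_zero hd']
      conv_rhs => rw [Polynomial.eq_C_of_degree_le_zero hd']
      simp
    rw [h00] at heq
    linarith
  set r : ℝ := Octo.Nsq ((z : ↥Octo.Vsub) : Octo) with hrdef
  have hr : 0 ≤ r := Octo.Nsq_nonneg _
  obtain ⟨T, hT1, hT2⟩ :=
    (((Polynomial.abs_tendsto_atTop q hdeg).eventually_ge_atTop r).and
      (Filter.eventually_ge_atTop (0 : ℝ))).exists
  have hT : r ≤ q.eval T := by rwa [abs_of_nonneg (hnn T)] at hT1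
  have hsub := intermediate_value_Icc hT2 ((q.continuous).continuousOn
      (s := Set.Icc (0:ℝ) T))
  have hrmem : r ∈ Set.Icc (q.eval 0) (q.eval T) := by
    rw [h00]; exact ⟨hr, hT⟩
  obtain ⟨t, _, ht⟩ := hsub hrmem
  have ht' : q.eval t = r := ht
  have hNsq : Octo.Nsq ((Octo.evalV p (t • v₀) : ↥Octo.Vsub) : Octo)
      = Octo.Nsq ((z : ↥Octo.Vsub) : Octo) := by
    rw [← key t]
    exact ht'
  obtain ⟨Φ, hΦ⟩ := Octo.exists_aut _ _ (Octo.evalV p (t • v₀)).2 z.2 hNsq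
  refine ⟨fun i => Φ.toHom ((t • v₀) i), ?_⟩
  have := Octo.evalV_comp Φ p (t • v₀)
  show Octo.evalV p (fun i => Φ.toHom ((t • v₀) i)) = z
  rw [this]
  exact Subtype.ext (by rw [Octo.MyAut.toHom_coe]; exact hΦ)
end
end

section
/- Let F be a field of characteristic ≠ 2 and let W be an F-vector space of dimension at least 4 with linearly independent vectors e₁, e₂, e₃, e₄. In the exterior algebra Λ(W), consider the image of the multilinear polynomial p(x,y) = xy − yx, i.e. the set S = {ab − ba : a, b ∈ Λ(W)}. Then e₁∧e₂ ∈ S and e₃∧e₄ ∈ S, but e₁∧e₂ + e₃∧e₄ ∉ S; hence S is not an F-linear subspace of Λ(W). -/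
noncomputable section

open ExteriorAlgebra

section Aux

variable {F : Type*} [Field F] {W : Type*} [AddCommGroup W] [Module F W]

lemma aux_swap (x y : W) : ι F y * ι F x = -(ι F x * ι F y) :=
  eq_neg_of_add_eq_zero_left (ι_add_mul_swap y x)

lemma aux_deg2_sq (x y : W) : (ι F x * ι F y) * (ι F x * ι F y) = 0 := by
  calc (ι F x * ι F y) * (ι F x * ι F y)
      = ι F x * ((ι F y * ι F x) * ι F y) := by simp only [mul_assoc]
    _ = ι F x * ((-(ι F x * ι F y)) * ι F y) := by rw [aux_swap]
    _ = -(ι F x * (ι F x * (ι F y * ι F y))) := by simp only [neg_mul, mul_neg, mul_assoc]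
    _ = 0 := by rw [ι_sq_zero, mul_zero, mul_zero, neg_zero]

lemma aux_ι_deg2_comm (x y z : W) :
    ι F z * (ι F x * ι F y) = (ι F x * ι F y) * ι F z := by
  calc ι F z * (ι F x * ι F y) = (ι F z * ι F x) * ι F y := (mul_assoc _ _ _).symm
    _ = -(ι F x * (ι F z * ι F y)) := by rw [aux_swap x z, neg_mul, mul_assoc]
    _ = -(ι F x * (-(ι F y * ι F z))) := by rw [aux_swap y z]
    _ = (ι F x * ι F y) * ι F z := by rw [mul_neg, neg_neg, mul_assoc]

lemma aux_deg2_comm (x y z w : W) :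
    (ι F x * ι F y) * (ι F z * ι F w) = (ι F z * ι F w) * (ι F x * ι F y) := by
  calc (ι F x * ι F y) * (ι F z * ι F w)
      = ((ι F x * ι F y) * ι F z) * ι F w := (mul_assoc _ _ _).symm
    _ = (ι F z * (ι F x * ι F y)) * ι F w := by rw [aux_ι_deg2_comm]
    _ = ι F z * ((ι F x * ι F y) * ι F w) := mul_assoc _ _ _
    _ = ι F z * (ι F w * (ι F x * ι F y)) := by rw [aux_ι_deg2_comm]
    _ = (ι F z * ι F w) * (ι F x * ι F y) := (mul_assoc _ _ _).symm

/-- The degree-2 component of a commutator is twice the product of the degree-1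
components. -/
lemma aux_proj_two_commutator (a b : ExteriorAlgebra F W) :
    GradedAlgebra.proj (fun i : ℕ => ⋀[F]^i W) 2 (a * b - b * a) =
      2 * (GradedAlgebra.proj (fun i : ℕ => ⋀[F]^i W) 1 a *
        GradedAlgebra.proj (fun i : ℕ => ⋀[F]^i W) 1 b) := by
  have h𝒜 : (fun i : ℕ => (⋀[F]^i W : Submodule F (ExteriorAlgebra F W)))
      = fun i : ℕ => ⋀[F]^i W := rfl
  induction a using DirectSum.Decomposition.inductionOn
      (ℳ := fun i : ℕ => (⋀[F]^i W : Submodule F (ExteriorAlgebra F W))) generalizing b with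
  | zero => simp
  | add a a' ha ha' =>
    have expand : (a + a') * b - b * (a + a') = (a * b - b * a) + (a' * b - b * a') := by
      noncomm_ring
    rw [expand, map_add, ha, ha', map_add]
    noncomm_ring
  | homogeneous x =>
    rename_i i
    induction b using DirectSum.Decomposition.inductionOn
        (ℳ := fun i : ℕ => (⋀[F]^i W : Submodule F (ExteriorAlgebra F W))) with
    | zero => simp
    | add b b' hb hb' =>
      have expand : (x : ExteriorAlgebra F W) * (b + b') - (b + b') * x
          = ((x : ExteriorAlgebra F W) * b - b * x) + ((x : ExteriorAlgebra F W) * b' - b' * x) := by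
        noncomm_ring
      rw [expand, map_add, hb, hb', map_add]
      noncomm_ring
    | homogeneous y =>
      rename_i j
      have hx : (x : ExteriorAlgebra F W) ∈ (⋀[F]^i W) := x.2
      have hy : (y : ExteriorAlgebra F W) ∈ (⋀[F]^j W) := y.2
      have hxy : (x : ExteriorAlgebra F W) * y ∈ (⋀[F]^(i+j) W) := SetLike.mul_mem_graded hx hy
      have hyx : (y : ExteriorAlgebra F W) * x ∈ (⋀[F]^(i+j) W) := by
        rw [add_comm]; exact SetLike.mul_mem_graded hy hx
      by_cases h2 : i + j = 2
      · -- the only relevant degrees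
        have hi : i ≤ 2 := by omega
        interval_cases i
        · -- i = 0 : x is a scalar, commutator vanishes
          have hx0 : (x : ExteriorAlgebra F W) ∈ (1 : Submodule F (ExteriorAlgebra F W)) := by
            simpa [pow_zero] using hx
          obtain ⟨r, hr⟩ := Submodule.mem_one.mp hx0
          have hcomm : (x : ExteriorAlgebra F W) * y - (y : ExteriorAlgebra F W) * x = 0 := by
            rw [← hr, Algebra.commutes, sub_self]
          rw [hcomm, map_zero]
          rw [GradedAlgebra.proj_apply, DirectSum.decompose_of_mem_ne (fun i : ℕ => ⋀[F]^i W) hx (by norm_num)]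
          simp
        · -- i = 1, j = 1 : the main case
          have hj : j = 1 := by omega
          subst hj
          have hx1 : (x : ExteriorAlgebra F W) ∈ LinearMap.range (ι F (M := W)) := by
            simpa [pow_one] using hx
          have hy1 : (y : ExteriorAlgebra F W) ∈ LinearMap.range (ι F (M := W)) := by
            simpa [pow_one] using hy
          obtain ⟨u, hu⟩ := hx1
          obtain ⟨v, hv⟩ := hy1
          have hcomm : (x : ExteriorAlgebra F W) * y - (y : ExteriorAlgebra F W) * x
              = 2 * ((x : ExteriorAlgebra F W) * y) := by
            rw [← hu, ← hv, aux_swap u v, sub_neg_eq_add, two_mul]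
          have hmem : 2 * ((x : ExteriorAlgebra F W) * y) ∈ (⋀[F]^2 W) := by
            rw [two_mul]; exact Submodule.add_mem _ hxy hxy
          rw [hcomm, GradedAlgebra.proj_apply, DirectSum.decompose_of_mem_same (fun i : ℕ => ⋀[F]^i W) hmem,
            GradedAlgebra.proj_apply, DirectSum.decompose_of_mem_same (fun i : ℕ => ⋀[F]^i W) hx,
            GradedAlgebra.proj_apply, DirectSum.decompose_of_mem_same (fun i : ℕ => ⋀[F]^i W) hy]
        · -- i = 2, j = 0 : y is a scalar
          have hj : j = 0 := by omega
          subst hj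
          have hy0 : (y : ExteriorAlgebra F W) ∈ (1 : Submodule F (ExteriorAlgebra F W)) := by
            simpa [pow_zero] using hy
          obtain ⟨r, hr⟩ := Submodule.mem_one.mp hy0
          have hcomm : (x : ExteriorAlgebra F W) * y - (y : ExteriorAlgebra F W) * x = 0 := by
            rw [← hr, ← Algebra.commutes, sub_self]
          rw [hcomm, map_zero]
          rw [GradedAlgebra.proj_apply (𝒜 := fun i : ℕ => (⋀[F]^i W : Submodule F (ExteriorAlgebra F W))) (i := 1) (r := (y : ExteriorAlgebra F W)),
            DirectSum.decompose_of_mem_ne (fun i : ℕ => ⋀[F]^i W) hy (by norm_num)]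
          simp
      · -- i + j ≠ 2 : everything vanishes
        rw [map_sub, GradedAlgebra.proj_apply, DirectSum.decompose_of_mem_ne (fun i : ℕ => ⋀[F]^i W) hxy h2,
          GradedAlgebra.proj_apply, DirectSum.decompose_of_mem_ne (fun i : ℕ => ⋀[F]^i W) hyx h2, sub_zero]
        by_cases hi : i = 1
        · have hj : j ≠ 1 := by omega
          rw [GradedAlgebra.proj_apply (𝒜 := fun i : ℕ => (⋀[F]^i W : Submodule F (ExteriorAlgebra F W))) (i := 1) (r := (y : ExteriorAlgebra F W)),
            DirectSum.decompose_of_mem_ne (fun i : ℕ => ⋀[F]^i W) hy hj]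
          simp
        · rw [GradedAlgebra.proj_apply (𝒜 := fun i : ℕ => (⋀[F]^i W : Submodule F (ExteriorAlgebra F W))) (i := 1) (r := (x : ExteriorAlgebra F W)),
            DirectSum.decompose_of_mem_ne (fun i : ℕ => ⋀[F]^i W) hx hi]
          simp

/-- A product of four `ι`'s of linearly independent vectors is nonzero. -/
lemma aux_prod_ne_zero (e₁ e₂ e₃ e₄ : W) (hli : LinearIndependent F ![e₁, e₂, e₃, e₄]) :
    ι F e₁ * ι F e₂ * ι F e₃ * ι F e₄ ≠ 0 := by
  classical
  set v : Fin 4 → W := ![e₁, e₂, e₃, e₄] with hv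
  have hinj : Function.Injective v := hli.injective
  have hs : LinearIndepOn F id (Set.range v) := (linearIndepOn_id_range_iff hinj).mpr hli
  let B := Module.Basis.extend hs
  have hmem : ∀ i : Fin 4, v i ∈ hs.extend (Set.subset_univ _) := fun i =>
    hs.subset_extend _ ⟨i, rfl⟩
  let j : Fin 4 → hs.extend (Set.subset_univ _) := fun i => ⟨v i, hmem i⟩
  have hjinj : Function.Injective j := by
    intro i k hik
    exact hinj (congrArg Subtype.val hik)
  have hBj : ∀ i, B (j i) = v i := fun i => Module.Basis.extend_apply_self hs (j i)
  let f : W →ₗ[F] (Fin 4 → F) := LinearMap.pi fun i => B.coord (j i)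
  let A : W [⋀^Fin 4]→ₗ[F] F := (Matrix.detRowAlternating).compLinearMap f
  have hAv : A v = 1 := by
    have hM : (Matrix.of fun i k => f (v i) k) = (1 : Matrix (Fin 4) (Fin 4) F) := by
      ext i k
      have : f (v i) k = B.coord (j k) (B (j i)) := by rw [hBj]; rfl
      rw [Matrix.of_apply, this, Module.Basis.coord_apply, Module.Basis.repr_self, Finsupp.single_apply]
      by_cases hik : i = k
      · subst hik; simp [Matrix.one_apply]
      · have : ¬ j i = j k := fun h => hik (hjinj h)
        simp [Matrix.one_apply, this, hik]
    show Matrix.detRowAlternating (fun i => f (v i)) = 1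
    show Matrix.det (Matrix.of fun i k => f (v i) k) = 1
    rw [hM, Matrix.det_one]
  intro h0
  have hmulti : ιMulti F 4 v = ι F e₁ * ι F e₂ * ι F e₃ * ι F e₄ := by
    rw [ιMulti_apply]
    simp [hv, List.ofFn_succ, mul_assoc]
  let φ := liftAlternating (R := F) (M := W) (N := F) (Pi.single 4 A)
  have h1 : φ (ιMulti F 4 v) = A v := by
    rw [liftAlternating_apply_ιMulti]
    simp [φ]
  rw [hmulti, h0, map_zero, hAv] at h1
  exact zero_ne_one h1

end Aux

set_option maxHeartbeats 1000000

/-- In the exterior algebra of a vector space of dimension at least 4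
over a field of characteristic ≠ 2, the image `S` of the multilinear polynomial
`p(x,y) = xy − yx` contains `e₁∧e₂` and `e₃∧e₄` but not their sum; hence `S` is not a
linear subspace. -/
theorem commutator_image_on_exterior_algebra_not_subspace
    (F : Type*) [Field F] (h2 : (2 : F) ≠ 0)
    (W : Type*) [AddCommGroup W] [Module F W] (hrank : 4 ≤ Module.rank F W)
    (e₁ e₂ e₃ e₄ : W) (hli : LinearIndependent F ![e₁, e₂, e₃, e₄]) :
    let S : Set (ExteriorAlgebra F W) :=
      {x | ∃ a b : ExteriorAlgebra F W, a * b - b * a = x}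
    ι F e₁ * ι F e₂ ∈ S ∧ ι F e₃ * ι F e₄ ∈ S ∧
      ι F e₁ * ι F e₂ + ι F e₃ * ι F e₄ ∉ S ∧
      ¬∃ U : Submodule F (ExteriorAlgebra F W), S = (U : Set (ExteriorAlgebra F W)) := by
  intro S
  -- a commutator realization of `ι x * ι y`
  have hmem : ∀ x y : W, ι F x * ι F y ∈ S := by
    intro x y
    refine ⟨algebraMap F _ 2⁻¹ * ι F x, ι F y, ?_⟩
    have key : (algebraMap F (ExteriorAlgebra F W) 2⁻¹ * ι F x) * ι F y -
        ι F y * (algebraMap F (ExteriorAlgebra F W) 2⁻¹ * ι F x)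
        = algebraMap F (ExteriorAlgebra F W) 2⁻¹ * (2 * (ι F x * ι F y)) := by
      rw [Algebra.left_comm (ι F y) (2⁻¹ : F) (ι F x), mul_assoc, ← mul_sub,
        aux_swap x y, sub_neg_eq_add, two_mul]
    rw [key, ← mul_assoc]
    have : algebraMap F (ExteriorAlgebra F W) 2⁻¹ * 2 = 1 := by
      have h22 : (2 : ExteriorAlgebra F W) = algebraMap F (ExteriorAlgebra F W) 2 := by
        rw [← one_add_one_eq_two, ← one_add_one_eq_two, map_add, map_one]
      rw [h22, ← map_mul, inv_mul_cancel₀ h2, map_one]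
    rw [this, one_mul]
  have hprod_ne : ι F e₁ * ι F e₂ * ι F e₃ * ι F e₄ ≠ 0 := aux_prod_ne_zero e₁ e₂ e₃ e₄ hli
  -- the nonmembership of the sum
  have hnot : ι F e₁ * ι F e₂ + ι F e₃ * ι F e₄ ∉ S := by
    rintro ⟨a, b, hab⟩
    -- degree-2 projection of the sum is itself
    have hmem1 : ι F e₁ * ι F e₂ ∈ (⋀[F]^2 W) := by
      have h1 : ι F e₁ ∈ (⋀[F]^1 W) := by
        simpa [pow_one] using LinearMap.mem_range_self (ι F (M := W)) e₁
      have h2' : ι F e₂ ∈ (⋀[F]^1 W) := by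
        simpa [pow_one] using LinearMap.mem_range_self (ι F (M := W)) e₂
      exact SetLike.mul_mem_graded h1 h2'
    have hmem2 : ι F e₃ * ι F e₄ ∈ (⋀[F]^2 W) := by
      have h1 : ι F e₃ ∈ (⋀[F]^1 W) := by
        simpa [pow_one] using LinearMap.mem_range_self (ι F (M := W)) e₃
      have h2' : ι F e₄ ∈ (⋀[F]^1 W) := by
        simpa [pow_one] using LinearMap.mem_range_self (ι F (M := W)) e₄
      exact SetLike.mul_mem_graded h1 h2'
    have hsum_mem : ι F e₁ * ι F e₂ + ι F e₃ * ι F e₄ ∈ (⋀[F]^2 W) := Submodule.add_mem _ hmem1 hmem2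
    have hproj := aux_proj_two_commutator a b
    rw [hab, GradedAlgebra.proj_apply, DirectSum.decompose_of_mem_same (fun i : ℕ => ⋀[F]^i W) hsum_mem] at hproj
    -- the degree-1 projections are of the form `ι u`, `ι v`
    have hpa : GradedAlgebra.proj (fun i : ℕ => ⋀[F]^i W) 1 a ∈ (⋀[F]^1 W) := by
      rw [GradedAlgebra.proj_apply]; exact SetLike.coe_mem _
    have hpb : GradedAlgebra.proj (fun i : ℕ => ⋀[F]^i W) 1 b ∈ (⋀[F]^1 W) := by
      rw [GradedAlgebra.proj_apply]; exact SetLike.coe_mem _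
    obtain ⟨u, hu⟩ : ∃ u, ι F u = GradedAlgebra.proj (fun i : ℕ => ⋀[F]^i W) 1 a := by
      simpa [pow_one, LinearMap.mem_range] using hpa
    obtain ⟨v, hv⟩ : ∃ v, ι F v = GradedAlgebra.proj (fun i : ℕ => ⋀[F]^i W) 1 b := by
      simpa [pow_one, LinearMap.mem_range] using hpb
    rw [← hu, ← hv] at hproj
    -- square both sides
    have hsq_rhs : (2 * (ι F u * ι F v)) * (2 * (ι F u * ι F v)) = 0 := by
      rw [two_mul, add_mul, mul_add, aux_deg2_sq u v]
      simp
    have hsq_lhs : (ι F e₁ * ι F e₂ + ι F e₃ * ι F e₄) * (ι F e₁ * ι F e₂ + ι F e₃ * ι F e₄)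
        = (ι F e₁ * ι F e₂) * (ι F e₃ * ι F e₄) + (ι F e₁ * ι F e₂) * (ι F e₃ * ι F e₄) := by
      rw [add_mul, mul_add, mul_add, aux_deg2_sq, aux_deg2_sq,
        aux_deg2_comm e₃ e₄ e₁ e₂]
      abel
    rw [hproj] at hsq_lhs
    rw [hsq_rhs] at hsq_lhs
    have h20 : (2 : F) • ((ι F e₁ * ι F e₂) * (ι F e₃ * ι F e₄)) = 0 := by
      rw [two_smul]; exact hsq_lhs.symm
    rcases smul_eq_zero.mp h20 with h | h
    · exact h2 h
    · exact hprod_ne (by rw [mul_assoc]; exact h)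
  refine ⟨hmem e₁ e₂, hmem e₃ e₄, hnot, ?_⟩
  rintro ⟨U, hU⟩
  apply hnot
  have h1 : ι F e₁ * ι F e₂ ∈ (U : Set (ExteriorAlgebra F W)) := hU ▸ hmem e₁ e₂
  have h2' : ι F e₃ * ι F e₄ ∈ (U : Set (ExteriorAlgebra F W)) := hU ▸ hmem e₃ e₄
  have : ι F e₁ * ι F e₂ + ι F e₃ * ι F e₄ ∈ (U : Set (ExteriorAlgebra F W)) := U.add_mem h1 h2'
  rwa [hU]
end
end
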